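/- arXiv:2306.06214 — 7 statements merged into one kernel-verified Lean document; each statement's English description precedes it below -/
import Mathlib

section
/- For all m, n ∈ ℕ and all z, w ∈ ℂ, H_{m,n}(z, w) = (−1)^{m+n} · exp(z·w) · D, where D is obtained by first taking the n-th iterated complex derivative of the function z' ↦ exp(−z'·w') in the first variable and then the m-th iterated complex derivative of the result in the second variable, evaluated at (z, w). In particular, specializing to w = conj z gives the Rodrigues formula H_{m,n}(z, conj z) = (−1)^{m+n} e^{|z|²} ∂^{m+n}/∂z̄^m ∂z^n (e^{−|z|²}). -/
open Complex

/-- The complex Hermite (Itô) polynomial `H_{m,n}(z,w)`. -/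
noncomputable def hermiteC (m n : ℕ) (z w : ℂ) : ℂ :=
  ∑ k ∈ Finset.range (min m n + 1),
    (-1 : ℂ) ^ k * (k.factorial : ℂ) * (m.choose k : ℂ) * (n.choose k : ℂ)
      * z ^ (m - k) * w ^ (n - k)

private noncomputable def Af (m n : ℕ) (z w : ℂ) (k : ℕ) : ℂ :=
  (-1 : ℂ) ^ k * (k.factorial : ℂ) * (m.choose k : ℂ) * (n.choose k : ℂ)
      * z ^ (m - k) * w ^ (n - k)

private noncomputable def Cf (m n : ℕ) (z w : ℂ) (k : ℕ) : ℂ :=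
  (-1 : ℂ) ^ k * (k.factorial : ℂ) * (m.choose k : ℂ) * (n.choose k : ℂ)
      * z ^ (m - k) * (((n - k : ℕ) : ℂ) * w ^ (n - k - 1))

private lemma Af_zero_of_big {m n k : ℕ} (h : min m n < k) (z w : ℂ) : Af m n z w k = 0 := by
  rcases min_lt_iff.mp h with h' | h' <;> simp [Af, Nat.choose_eq_zero_of_lt h']

private lemma Cf_zero_of_big {m n k : ℕ} (h : min m n < k) (z w : ℂ) : Cf m n z w k = 0 := by
  rcases min_lt_iff.mp h with h' | h' <;> simp [Cf, Nat.choose_eq_zero_of_lt h']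

private lemma hermiteC_eq_sum (m n N : ℕ) (h : min m n < N) (z w : ℂ) :
    hermiteC m n z w = ∑ k ∈ Finset.range N, Af m n z w k := by
  unfold hermiteC Af
  apply Finset.sum_subset (Finset.range_subset_range.mpr h)
  intro k _ hk
  have hlt : min m n < k := by simp [Finset.mem_range] at hk; omega
  have := Af_zero_of_big hlt z w
  simpa [Af] using this

private lemma complex_key (m n k : ℕ) (z w : ℂ) :
    ((k+1).factorial : ℂ) * (((m+1).choose (k+1) : ℕ) : ℂ) * ((n.choose (k+1) : ℕ) : ℂ) =
      ((k+1).factorial : ℂ) * ((m.choose (k+1) : ℕ) : ℂ) * ((n.choose (k+1) : ℕ) : ℂ)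
        + (k.factorial : ℂ) * ((m.choose k : ℕ) : ℂ) * ((n.choose k : ℕ) : ℂ) * ((n - k : ℕ) : ℂ) := by
  have h : ((n.choose (k+1) : ℕ) : ℂ) * ((k : ℂ) + 1) = ((n.choose k : ℕ) : ℂ) * ((n - k : ℕ) : ℂ) := by
    exact_mod_cast congrArg (Nat.cast : ℕ → ℂ) (Nat.choose_succ_right_eq n k)
  have h2 : (((m+1).choose (k+1) : ℕ) : ℂ) = ((m.choose k : ℕ) : ℂ) + ((m.choose (k+1) : ℕ) : ℂ) := by
    exact_mod_cast congrArg (Nat.cast : ℕ → ℂ) (Nat.choose_succ_succ m k)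
  have h3 : ((k+1).factorial : ℂ) = ((k : ℂ) + 1) * (k.factorial : ℂ) := by
    push_cast [Nat.factorial_succ]; ring
  rw [h2, h3]
  linear_combination (k.factorial : ℂ) * ((m.choose k : ℕ) : ℂ) * h

private lemma step_eq (m n : ℕ) (z w : ℂ) (k : ℕ) :
    Af (m+1) n z w (k+1) = z * Af m n z w (k+1) - Cf m n z w k := by
  have hz : ((m.choose (k+1) : ℕ) : ℂ) * (z * z ^ (m - (k+1))) =
      ((m.choose (k+1) : ℕ) : ℂ) * z ^ (m - k) := by
    by_cases hk : k < m
    · congr 1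
      rw [← pow_succ']
      congr 1
      omega
    · rw [Nat.choose_eq_zero_of_lt (by omega)]; simp
  simp only [Af, Cf, Nat.succ_sub_succ, Nat.sub_sub]
  linear_combination ((-1 : ℂ)^(k+1) * z ^ (m-k) * w ^ (n - (k+1))) * complex_key m n k z w
    + ((-1 : ℂ)^k * ((k+1).factorial : ℂ) * ((n.choose (k+1) : ℕ) : ℂ) * w ^ (n - (k+1))) * hz

private lemma Cf_sum_eq (m n N : ℕ) (h : min m n < N) (z w : ℂ) :
    ∑ k ∈ Finset.range (min m n + 1), Cf m n z w k = ∑ k ∈ Finset.range N, Cf m n z w k := by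
  apply Finset.sum_subset (Finset.range_subset_range.mpr h)
  intro k _ hk
  have hlt : min m n < k := by simp [Finset.mem_range] at hk; omega
  exact Cf_zero_of_big hlt z w

private lemma hermiteC_rec (m n : ℕ) (z w : ℂ) :
    hermiteC (m+1) n z w = z * hermiteC m n z w
      - ∑ k ∈ Finset.range (min m n + 1), Cf m n z w k := by
  rw [hermiteC_eq_sum (m+1) n (m+n+2) (by omega), hermiteC_eq_sum m n (m+n+2) (by omega),
    Cf_sum_eq m n (m+n+2) (by omega), Finset.mul_sum,
    Finset.sum_range_succ' (Af (m+1) n z w) (m+n+1),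
    Finset.sum_range_succ' (fun k => z * Af m n z w k) (m+n+1),
    Finset.sum_range_succ (Cf m n z w) (m+n+1)]
  have hCN : Cf m n z w (m+n+1) = 0 := by
    simp [Cf, show n - (m+n+1) = 0 from by omega]
  have h0 : Af (m+1) n z w 0 = z * Af m n z w 0 := by
    simp [Af, pow_succ]
    ring
  rw [hCN, h0, Finset.sum_congr rfl (fun k _ => step_eq m n z w k), Finset.sum_sub_distrib]
  ring

private lemma hermiteC_hasDerivAt (m n : ℕ) (z w : ℂ) :
    HasDerivAt (fun w => hermiteC m n z w)
      (∑ k ∈ Finset.range (min m n + 1), Cf m n z w k) w := by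
  have h : ∀ k ∈ Finset.range (min m n + 1),
      HasDerivAt (fun w : ℂ =>
        (-1 : ℂ) ^ k * (k.factorial : ℂ) * (m.choose k : ℂ) * (n.choose k : ℂ)
          * z ^ (m - k) * w ^ (n - k)) (Cf m n z w k) w := by
    intro k _
    exact HasDerivAt.const_mul _ (hasDerivAt_pow (n - k) w)
  simpa [hermiteC, Cf] using HasDerivAt.fun_sum h

private lemma inner_deriv (n : ℕ) (w : ℂ) :
    ∀ z : ℂ, iteratedDeriv n (fun z' => Complex.exp (-(z' * w))) z
      = (-w) ^ n * Complex.exp (-(z * w)) := by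
  induction n with
  | zero => intro z; simp
  | succ n ih =>
    intro z
    rw [iteratedDeriv_succ, funext ih]
    have h1 : HasDerivAt (fun z : ℂ => z * w) w z := hasDerivAt_mul_const w
    have h0 : HasDerivAt (fun z : ℂ => (-w) ^ n * Complex.exp (-(z * w)))
        ((-w) ^ n * (Complex.exp (-(z * w)) * -w)) z :=
      HasDerivAt.const_mul _ (h1.neg.cexp)
    rw [h0.deriv, pow_succ]
    ring

private lemma key_lemma (n : ℕ) (z : ℂ) :
    ∀ m : ℕ, ∀ w : ℂ, iteratedDeriv m (fun w' => (-w') ^ n * Complex.exp (-(z * w'))) w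
      = (-1 : ℂ) ^ (m + n) * Complex.exp (-(z * w)) * hermiteC m n z w := by
  intro m
  induction m with
  | zero =>
    intro w
    rw [iteratedDeriv_zero, neg_pow]
    have h : hermiteC 0 n z w = w ^ n := by simp [hermiteC]
    rw [h]
    ring
  | succ m ih =>
    intro w
    rw [iteratedDeriv_succ, funext ih]
    have h1 : HasDerivAt (fun w : ℂ => z * w) z w := by
      simpa using (hasDerivAt_id w).const_mul z
    have hexp : HasDerivAt (fun w : ℂ => Complex.exp (-(z * w)))
        (Complex.exp (-(z * w)) * -z) w := h1.neg.cexp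
    have h3 := (hexp.const_mul ((-1 : ℂ) ^ (m + n))).fun_mul (hermiteC_hasDerivAt m n z w)
    rw [h3.deriv, hermiteC_rec m n z w]
    ring

private lemma main_eq (m n : ℕ) (z w : ℂ) :
    hermiteC m n z w =
      (-1 : ℂ) ^ (m + n) * Complex.exp (z * w) *
        iteratedDeriv m
          (fun w' => iteratedDeriv n (fun z' => Complex.exp (-(z' * w'))) z) w := by
  have hfun : (fun w' => iteratedDeriv n (fun z' => Complex.exp (-(z' * w'))) z)
      = fun w' => (-w') ^ n * Complex.exp (-(z * w')) :=
    funext fun w' => inner_deriv n w' z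
  rw [hfun, key_lemma n z m w]
  have hexp : Complex.exp (z * w) * Complex.exp (-(z * w)) = 1 := by
    rw [← Complex.exp_add]; simp
  have h2 : ((-1 : ℂ) ^ (m + n)) * ((-1 : ℂ) ^ (m + n)) = 1 := by
    rw [← pow_add]
    exact Even.neg_one_pow ⟨m + n, rfl⟩
  linear_combination (-((-1 : ℂ) ^ (m + n) * (-1 : ℂ) ^ (m + n) * hermiteC m n z w)) * hexp
    + (-(hermiteC m n z w)) * h2

/-- **Rodrigues formula for the complex Hermite polynomials.**
`H_{m,n}(z,w) = (-1)^{m+n} e^{zw} ∂_w^m ∂_z^n (e^{-zw})`; in particular, at `w = conj z`,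
`H_{m,n}(z, z̄) = (-1)^{m+n} e^{|z|²} ∂_{z̄}^m ∂_z^n (e^{-|z|²})`. -/
theorem hermiteC_rodrigues (m n : ℕ) (z w : ℂ) :
    hermiteC m n z w =
      (-1 : ℂ) ^ (m + n) * Complex.exp (z * w) *
        iteratedDeriv m
          (fun w' => iteratedDeriv n (fun z' => Complex.exp (-(z' * w'))) z) w ∧
    hermiteC m n z (starRingEnd ℂ z) =
      (-1 : ℂ) ^ (m + n) * Complex.exp (((‖z‖ : ℝ) : ℂ) ^ 2) *
        iteratedDeriv m
          (fun w' => iteratedDeriv n (fun z' => Complex.exp (-(z' * w'))) z)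
          (starRingEnd ℂ z) := by
  refine ⟨main_eq m n z w, ?_⟩
  have habs : (((‖z‖ : ℝ) : ℂ)) ^ 2 = z * starRingEnd ℂ z := by
    rw [Complex.mul_conj]
    norm_cast
    exact Complex.sq_norm z
  rw [habs]
  exact main_eq m n z (starRingEnd ℂ z)
end

section
/- For all z, w, u, v ∈ ℂ, the double series Σ_{m=0}^∞ Σ_{n=0}^∞ H_{m,n}(z, w) · u^m v^n / (m! n!) converges (as a sum over ℕ × ℕ) and equals exp(u·z + v·w − u·v). In particular, taking w = conj z, u arbitrary and v = conj u gives Σ_{m,n} H_{m,n}(z, conj z) u^m (conj u)^n/(m! n!) = exp(u z + conj(u z) − |u|²). -/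
open Complex

/-- Reindexing equivalence for the triple exponential series. -/
def hermiteEquivAux : (Σ p : ℕ × ℕ, Fin (min p.1 p.2 + 1)) ≃ ℕ × ℕ × ℕ where
  toFun x := (x.1.1 - x.2.1, x.1.2 - x.2.1, x.2.1)
  invFun y := ⟨(y.1 + y.2.2, y.2.1 + y.2.2), ⟨y.2.2, by omega⟩⟩
  left_inv := by
    rintro ⟨⟨m, n⟩, ⟨k, hk⟩⟩
    have hm : m - k + k = m := by omega
    have hn : n - k + k = n := by omega
    apply Sigma.ext
    · simp [hm, hn]
    · exact (Fin.heq_ext_iff (by simp [hm, hn])).2 rfl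
  right_inv := by rintro ⟨i, j, k⟩; simp

lemma hermite_term_eq (z w u v : ℂ) (m n k : ℕ) (hkm : k ≤ m) (hkn : k ≤ n) :
    (u * z) ^ (m - k) / (m - k).factorial *
      ((v * w) ^ (n - k) / (n - k).factorial * ((-(u * v)) ^ k / k.factorial)) =
    (-1 : ℂ) ^ k * (k.factorial : ℂ) * (m.choose k : ℂ) * (n.choose k : ℂ)
      * z ^ (m - k) * w ^ (n - k) * u ^ m * v ^ n / ((m.factorial : ℂ) * n.factorial) := by
  have a : (m.choose k : ℂ) * k.factorial * (m - k).factorial = m.factorial := by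
    exact_mod_cast congrArg (Nat.cast : ℕ → ℂ)
      (Nat.choose_mul_factorial_mul_factorial hkm)
  have b : (n.choose k : ℂ) * k.factorial * (n - k).factorial = n.factorial := by
    exact_mod_cast congrArg (Nat.cast : ℕ → ℂ)
      (Nat.choose_mul_factorial_mul_factorial hkn)
  have hu : u ^ m = u ^ (m - k) * u ^ k := by rw [← pow_add]; congr 1; omega
  have hv : v ^ n = v ^ (n - k) * v ^ k := by rw [← pow_add]; congr 1; omega
  have h1 : ((m - k).factorial : ℂ) ≠ 0 := Nat.cast_ne_zero.2 (Nat.factorial_ne_zero _)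
  have h2 : ((n - k).factorial : ℂ) ≠ 0 := Nat.cast_ne_zero.2 (Nat.factorial_ne_zero _)
  have h3 : (k.factorial : ℂ) ≠ 0 := Nat.cast_ne_zero.2 (Nat.factorial_ne_zero _)
  have h4 : (m.factorial : ℂ) ≠ 0 := Nat.cast_ne_zero.2 (Nat.factorial_ne_zero _)
  have h5 : (n.factorial : ℂ) ≠ 0 := Nat.cast_ne_zero.2 (Nat.factorial_ne_zero _)
  rw [hu, hv, neg_pow, mul_pow, mul_pow, mul_pow]
  field_simp
  ring_nf
  linear_combination
    (-1:ℂ) * (z^(m-k) * w^(n-k) * u^(m-k) * u^k * v^(n-k) * v^k * (n.factorial : ℂ)) * a +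
    (-1:ℂ) * (z^(m-k) * w^(n-k) * u^(m-k) * u^k * v^(n-k) * v^k *
      (m.choose k : ℂ) * k.factorial * (m-k).factorial) * b

lemma hermiteC_generating_function_aux (z w u v : ℂ) :
    HasSum
      (fun p : ℕ × ℕ =>
        hermiteC p.1 p.2 z w * u ^ p.1 * v ^ p.2 / ((p.1.factorial : ℂ) * (p.2.factorial : ℂ)))
      (Complex.exp (u * z + v * w - u * v)) := by
  have hexp : ∀ a : ℂ, HasSum (fun n : ℕ => a ^ n / n.factorial) (Complex.exp a) := fun a => by
    simpa [Complex.exp_eq_exp_ℂ] using NormedSpace.expSeries_div_hasSum_exp a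
  have hnorm : ∀ a : ℂ, Summable (fun n : ℕ => ‖a ^ n / (n.factorial : ℂ)‖) := fun a => by
    simpa [norm_div, norm_pow] using Real.summable_pow_div_factorial ‖a‖
  have hbc := (hexp (v * w)).mul (hexp (-(u * v)))
    (summable_mul_of_summable_norm (R := ℂ)
      (f := fun n : ℕ => (v * w) ^ n / n.factorial)
      (g := fun n : ℕ => (-(u * v)) ^ n / n.factorial)
      (hnorm (v * w)) (hnorm (-(u * v))))
  have hbcnorm := Summable.mul_norm (R := ℂ)
    (f := fun n : ℕ => (v * w) ^ n / n.factorial)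
    (g := fun n : ℕ => (-(u * v)) ^ n / n.factorial)
    (hnorm (v * w)) (hnorm (-(u * v)))
  have htriple := (hexp (u * z)).mul hbc
    (summable_mul_of_summable_norm (R := ℂ)
      (f := fun n : ℕ => (u * z) ^ n / n.factorial)
      (g := fun q : ℕ × ℕ =>
        (v * w) ^ q.1 / q.1.factorial * ((-(u * v)) ^ q.2 / q.2.factorial))
      (hnorm (u * z)) hbcnorm)
  have hE : Complex.exp (u * z) * (Complex.exp (v * w) * Complex.exp (-(u * v)))
      = Complex.exp (u * z + v * w - u * v) := by
    rw [← Complex.exp_add, ← Complex.exp_add]; ring_nf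
  rw [hE] at htriple
  have hsigma := hermiteEquivAux.hasSum_iff.2 htriple
  refine HasSum.sigma hsigma fun p => ?_
  have key : ∑ k : Fin (min p.1 p.2 + 1),
      (u * z) ^ (p.1 - (k : ℕ)) / (p.1 - (k : ℕ)).factorial *
        ((v * w) ^ (p.2 - (k : ℕ)) / (p.2 - (k : ℕ)).factorial *
          ((-(u * v)) ^ (k : ℕ) / ((k : ℕ)).factorial)) =
      hermiteC p.1 p.2 z w * u ^ p.1 * v ^ p.2 /
        ((p.1.factorial : ℂ) * (p.2.factorial : ℂ)) := by
    rw [Fin.sum_univ_eq_sum_range (fun k =>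
        (u * z) ^ (p.1 - k) / ((p.1 - k).factorial : ℂ) *
          ((v * w) ^ (p.2 - k) / (p.2 - k).factorial *
            ((-(u * v)) ^ k / k.factorial))),
      hermiteC, Finset.sum_mul, Finset.sum_mul, Finset.sum_div]
    refine Finset.sum_congr rfl fun k hk => ?_
    rw [Finset.mem_range] at hk
    exact hermite_term_eq z w u v p.1 p.2 k (by omega) (by omega)
  have hfin := hasSum_fintype (fun k : Fin (min p.1 p.2 + 1) =>
      (u * z) ^ (p.1 - (k : ℕ)) / (p.1 - (k : ℕ)).factorial *
        ((v * w) ^ (p.2 - (k : ℕ)) / (p.2 - (k : ℕ)).factorial *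
          ((-(u * v)) ^ (k : ℕ) / ((k : ℕ)).factorial)))
  rw [key] at hfin
  convert hfin using 1
  rfl

/-- **Generating function of the complex Hermite polynomials.**
`∑_{m,n} H_{m,n}(z,w) u^m v^n/(m! n!) = e^{uz + vw - uv}`, and, in particular, with
`w = conj z`, `v = conj u`: `∑ H_{m,n}(z,z̄) u^m ū^n/(m! n!) = e^{uz + conj(uz) - |u|²}`. -/
theorem hermiteC_generating_function (z w u v : ℂ) :
    HasSum
      (fun p : ℕ × ℕ =>
        hermiteC p.1 p.2 z w * u ^ p.1 * v ^ p.2 / ((p.1.factorial : ℂ) * (p.2.factorial : ℂ)))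
      (Complex.exp (u * z + v * w - u * v)) ∧
    HasSum
      (fun p : ℕ × ℕ =>
        hermiteC p.1 p.2 z (starRingEnd ℂ z) * u ^ p.1 * (starRingEnd ℂ u) ^ p.2 /
          ((p.1.factorial : ℂ) * (p.2.factorial : ℂ)))
      (Complex.exp (u * z + starRingEnd ℂ (u * z) - ((‖u‖ : ℝ) : ℂ) ^ 2)) := by
  refine ⟨hermiteC_generating_function_aux z w u v, ?_⟩
  have h := hermiteC_generating_function_aux z (starRingEnd ℂ z) u (starRingEnd ℂ u)
  have harg : u * z + starRingEnd ℂ u * starRingEnd ℂ z - u * starRingEnd ℂ u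
      = u * z + starRingEnd ℂ (u * z) - ((‖u‖ : ℝ) : ℂ) ^ 2 := by
    rw [map_mul, Complex.mul_conj]
    norm_cast
    rw [Complex.sq_norm]
  rwa [harg] at h
end

section
/- The complex Hermite polynomials are eigenfunctions of the Landau operator: for all m, n ∈ ℕ and all z, w ∈ ℂ, −(∂_z ∂_w H_{m,n})(z, w) + w · (∂_w H_{m,n})(z, w) = n · H_{m,n}(z, w), where ∂_z and ∂_w denote the complex derivatives of H_{m,n}(z, w) in the first and second variable respectively. (At w = conj z this is the identity 𝒢 H_{m,n}(z, z̄) = n H_{m,n}(z, z̄) for the Landau operator 𝒢 = −∂²/∂z̄∂z + z̄ ∂/∂z̄.) -/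
open Complex

lemma hermite_aux_nat (m n k : ℕ) :
    (k+1).factorial * m.choose (k+1) * n.choose (k+1) * (k+1) =
      k.factorial * m.choose k * n.choose k * ((m-k)*(n-k)) := by
  rw [Nat.factorial_succ]
  calc (k+1) * k.factorial * m.choose (k+1) * n.choose (k+1) * (k+1)
      = k.factorial * (m.choose (k+1) * (k+1)) * (n.choose (k+1) * (k+1)) := by ring
    _ = k.factorial * (m.choose k * (m-k)) * (n.choose k * (n-k)) := by
        rw [Nat.choose_succ_right_eq, Nat.choose_succ_right_eq]
    _ = _ := by ring

lemma hermite_mul_pow (n k : ℕ) (w : ℂ) :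
    w * (((n-k : ℕ) : ℂ) * w ^ (n-k-1)) = ((n-k : ℕ) : ℂ) * w ^ (n-k) := by
  rcases le_or_gt n k with h | h
  · simp [Nat.sub_eq_zero_of_le h]
  · have hnk : n - k = (n - k - 1) + 1 := by omega
    have hp : w ^ (n-k) = w ^ (n-k-1) * w := by rw [← pow_succ, ← hnk]
    rw [hp]; ring

/-- **Complex Hermite polynomials are eigenfunctions of the Landau operator:**
`-∂_z ∂_w H_{m,n}(z,w) + w ∂_w H_{m,n}(z,w) = n H_{m,n}(z,w)`.
(At `w = conj z` this is `𝒢 H_{m,n}(z,z̄) = n H_{m,n}(z,z̄)` for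
`𝒢 = -∂²/∂z̄∂z + z̄ ∂/∂z̄`.) -/
theorem hermiteC_landau_eigenfunction (m n : ℕ) (z w : ℂ) :
    -(deriv (fun z' => deriv (fun w' => hermiteC m n z' w') w) z) +
        w * deriv (fun w' => hermiteC m n z w') w =
      (n : ℂ) * hermiteC m n z w := by
  set N := min m n with hN
  set c : ℕ → ℂ := fun k =>
    (-1 : ℂ) ^ k * (k.factorial : ℂ) * (m.choose k : ℂ) * (n.choose k : ℂ) with hc
  -- first derivative in w
  have hd1 : ∀ z' : ℂ, deriv (fun w' => hermiteC m n z' w') w =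
      ∑ k ∈ Finset.range (N + 1),
        c k * z' ^ (m-k) * (((n-k : ℕ) : ℂ) * w ^ (n-k-1)) := by
    intro z'
    unfold hermiteC
    rw [deriv_fun_sum (fun i _ => by fun_prop)]
    refine Finset.sum_congr rfl fun k _ => ?_
    have : (fun w' : ℂ => (-1:ℂ)^k * k.factorial * m.choose k * n.choose k
        * z' ^ (m-k) * w' ^ (n-k)) = fun w' => (c k * z' ^ (m-k)) * w' ^ (n-k) := by
      funext w'; rw [hc]
    rw [this]
    rw [deriv_const_mul _ (by fun_prop)]
    rw [deriv_pow_field]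
  have hd2 : deriv (fun z' => deriv (fun w' => hermiteC m n z' w') w) z =
      ∑ k ∈ Finset.range (N + 1),
        c k * (((m-k : ℕ) : ℂ) * z ^ (m-k-1)) * (((n-k : ℕ) : ℂ) * w ^ (n-k-1)) := by
    have : (fun z' => deriv (fun w' => hermiteC m n z' w') w) =
        fun z' => ∑ k ∈ Finset.range (N + 1),
          c k * z' ^ (m-k) * (((n-k : ℕ) : ℂ) * w ^ (n-k-1)) := funext hd1
    rw [this, deriv_fun_sum (fun i _ => by fun_prop)]
    refine Finset.sum_congr rfl fun k _ => ?_
    have : (fun z' : ℂ => c k * z' ^ (m-k) * (((n-k : ℕ) : ℂ) * w ^ (n-k-1)))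
        = fun z' => (c k * (((n-k : ℕ) : ℂ) * w ^ (n-k-1))) * z' ^ (m-k) := by
      funext z'; ring
    rw [this, deriv_const_mul _ (by fun_prop), deriv_pow_field]
    ring
  rw [hd1 z, hd2]
  unfold hermiteC
  rw [Finset.mul_sum, Finset.mul_sum, ← hN]
  -- reduce to a sum identity
  have hw : ∀ k ∈ Finset.range (N+1),
      w * (c k * z ^ (m-k) * (((n-k : ℕ) : ℂ) * w ^ (n-k-1)))
        = c k * ((n:ℂ) - (k:ℂ)) * z ^ (m-k) * w ^ (n-k) := by
    intro k hk
    have hk' : k < N + 1 := Finset.mem_range.mp hk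
    have hkn : k ≤ n := le_trans (Nat.lt_succ_iff.mp hk') (le_trans (le_of_eq hN) (Nat.min_le_right m n))
    have : ((n-k : ℕ) : ℂ) = (n:ℂ) - (k:ℂ) := by push_cast [Nat.cast_sub hkn]; ring
    calc w * (c k * z ^ (m-k) * (((n-k : ℕ) : ℂ) * w ^ (n-k-1)))
        = c k * z ^ (m-k) * (w * (((n-k : ℕ) : ℂ) * w ^ (n-k-1))) := by ring
      _ = c k * z ^ (m-k) * (((n-k : ℕ) : ℂ) * w ^ (n-k)) := by rw [hermite_mul_pow]
      _ = _ := by rw [this]; ring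
  rw [Finset.sum_congr rfl hw]
  have hgoal : ∑ k ∈ Finset.range (N+1),
      c k * (((m-k : ℕ) : ℂ) * z ^ (m-k-1)) * (((n-k : ℕ) : ℂ) * w ^ (n-k-1))
      = ∑ k ∈ Finset.range (N+1), -(c k * (k:ℂ) * z ^ (m-k) * w ^ (n-k)) := by
    have hAN : c N * (((m-N:ℕ):ℂ) * z^(m-N-1)) * (((n-N:ℕ):ℂ) * w^(n-N-1)) = 0 := by
      rcases Nat.le_total m n with h | h
      · simp [hN, Nat.min_eq_left h]
      · simp [hN, Nat.min_eq_right h]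
    have hkey : ∀ k < N,
        c k * (((m-k:ℕ):ℂ) * z^(m-k-1)) * (((n-k:ℕ):ℂ) * w^(n-k-1))
          = -(c (k+1) * (((k+1:ℕ)):ℂ) * z^(m-(k+1)) * w^(n-(k+1))) := by
      intro k hk
      have hkm : k < m := lt_of_lt_of_le (hN ▸ hk) (Nat.min_le_left m n)
      have hkn : k < n := lt_of_lt_of_le (hN ▸ hk) (Nat.min_le_right m n)
      rw [hc]
      have hnat : ((((k+1).factorial * m.choose (k+1) * n.choose (k+1) * (k+1) : ℕ)) : ℂ)
          = (((k.factorial * m.choose k * n.choose k * ((m-k)*(n-k)) : ℕ)) : ℂ) := by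
        exact_mod_cast congrArg (Nat.cast : ℕ → ℂ) (hermite_aux_nat m n k)
      push_cast at hnat
      have hm1 : m - (k+1) = m - k - 1 := by omega
      have hn1 : n - (k+1) = n - k - 1 := by omega
      simp only [hm1, hn1, pow_succ]
      push_cast
      linear_combination (-(1:ℂ))*(-1:ℂ)^k * z^(m-k-1) * w^(n-k-1) * hnat
    rw [Finset.sum_range_succ, hAN, add_zero,
      Finset.sum_range_succ' (fun k => -(c k * (k:ℂ) * z ^ (m-k) * w ^ (n-k)))]
    simp only [Nat.cast_zero, mul_zero, zero_mul, neg_zero, add_zero]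
    exact Finset.sum_congr rfl fun k hk => hkey k (Finset.mem_range.mp hk)
  rw [hgoal]
  simp only [Finset.sum_neg_distrib, neg_neg]
  rw [← Finset.sum_add_distrib]
  refine Finset.sum_congr rfl fun k _ => ?_
  simp only [hc]
  ring
end

section
/- Appell property for bicomplex Hermite polynomials: fix m ≥ 1, n ∈ ℕ and W ∈ ℂ × ℂ. The map Z ↦ 𝐇_{m,n}(Z, W) from ℂ × ℂ to ℂ × ℂ is complex Fréchet differentiable at every Z, with derivative equal to the linear map T ↦ m · 𝐇_{m−1,n}(Z, W) · T (multiplication by m 𝐇_{m−1,n}(Z, W) in the algebra ℂ × ℂ). Similarly, for n ≥ 1 and fixed Z, the map W ↦ 𝐇_{m,n}(Z, W) is differentiable with derivative T ↦ n · 𝐇_{m,n−1}(Z, W) · T. -/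
open Complex

/-- The bicomplex Hermite polynomial of the first kind `𝐇_{m,n}(Z,W)`, computed in the
bicomplex algebra `ℂ × ℂ` (idempotent representation, componentwise operations). -/
noncomputable def hermiteBC (m n : ℕ) (Z W : ℂ × ℂ) : ℂ × ℂ :=
  ∑ k ∈ Finset.range (min m n + 1),
    ((-1 : ℂ) ^ k * (k.factorial : ℂ) * (m.choose k : ℂ) * (n.choose k : ℂ)) •
      (Z ^ (m - k) * W ^ (n - k))

lemma hermiteBC_hasFDerivAt_pow (p : ℕ) (Z : ℂ × ℂ) :
    HasFDerivAt (fun x : ℂ × ℂ => x ^ p)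
      (ContinuousLinearMap.mul ℂ (ℂ × ℂ) ((p : ℂ) • Z ^ (p - 1))) Z := by
  induction p with
  | zero =>
      simpa using hasFDerivAt_const (1 : ℂ × ℂ) Z
  | succ q ih =>
      have h := ih.fun_mul (hasFDerivAt_id Z)
      have h2 : (fun y : ℂ × ℂ => y ^ q * id y) = fun y : ℂ × ℂ => y ^ (q + 1) := by
        funext y; simp [pow_succ]
      rw [h2] at h
      refine h.congr_fderiv (ContinuousLinearMap.ext fun t => ?_)
      simp only [ContinuousLinearMap.mul_apply', ContinuousLinearMap.add_apply,
        ContinuousLinearMap.smul_apply, ContinuousLinearMap.coe_id', id_eq,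
        Nat.add_sub_cancel, Nat.cast_add, Nat.cast_one, smul_eq_mul]
      rcases q with _ | r
      · simp
      · rw [Nat.add_sub_cancel, Algebra.smul_def, Algebra.smul_def, map_add, map_one, pow_succ]
        ring

lemma hermiteBC_hasFDerivAt_term (c : ℂ) (p : ℕ) (w Z : ℂ × ℂ) :
    HasFDerivAt (fun x : ℂ × ℂ => c • (x ^ p * w))
      (ContinuousLinearMap.mul ℂ (ℂ × ℂ) (c • ((p : ℂ) • (Z ^ (p - 1) * w)))) Z := by
  have h := ((hermiteBC_hasFDerivAt_pow p Z).mul_const w).const_smul c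
  refine h.congr_fderiv (ContinuousLinearMap.ext fun t => ?_).symm
  simp only [ContinuousLinearMap.smul_apply, ContinuousLinearMap.mul_apply', smul_eq_mul]
  rw [Algebra.smul_def, Algebra.smul_def, Algebra.smul_def, Algebra.smul_def]
  ring

lemma hermiteBC_hasFDerivAt_fst (m n : ℕ) (Z W : ℂ × ℂ) :
    HasFDerivAt (fun Z' => hermiteBC m n Z' W)
      (ContinuousLinearMap.mul ℂ (ℂ × ℂ)
        (∑ k ∈ Finset.range (min m n + 1),
          ((-1 : ℂ) ^ k * (k.factorial : ℂ) * (m.choose k : ℂ) * (n.choose k : ℂ)) •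
            (((m - k : ℕ) : ℂ) • (Z ^ (m - k - 1) * W ^ (n - k))))) Z := by
  have h := HasFDerivAt.fun_sum (u := Finset.range (min m n + 1))
    (fun k _ => hermiteBC_hasFDerivAt_term
      ((-1 : ℂ) ^ k * (k.factorial : ℂ) * (m.choose k : ℂ) * (n.choose k : ℂ))
      (m - k) (W ^ (n - k)) Z)
  refine h.congr_fderiv ?_
  rw [← map_sum]

lemma hermiteBC_key (m n : ℕ) (hm : 1 ≤ m) (Z W : ℂ × ℂ) :
    ∑ k ∈ Finset.range (min m n + 1),
      ((-1 : ℂ) ^ k * (k.factorial : ℂ) * (m.choose k : ℂ) * (n.choose k : ℂ)) •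
        (((m - k : ℕ) : ℂ) • (Z ^ (m - k - 1) * W ^ (n - k)))
    = (m : ℂ) • hermiteBC (m - 1) n Z W := by
  unfold hermiteBC
  rw [Finset.smul_sum]
  have hsub : Finset.range (min (m - 1) n + 1) ⊆ Finset.range (min m n + 1) :=
    Finset.range_subset_range.2 (by omega)
  rw [← Finset.sum_subset hsub ?_]
  · refine Finset.sum_congr rfl fun k hk => ?_
    simp only [Finset.mem_range] at hk
    have hkm : k ≤ m - 1 := by omega
    have h0 : m - 1 + 1 = m := by omega
    have hnat : (m - 1).choose k * m = m.choose k * (m - k) := by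
      have := Nat.choose_mul_succ_eq (m - 1) k
      rwa [h0] at this
    have hc : (m.choose k : ℂ) * ((m - k : ℕ) : ℂ) = (m : ℂ) * ((m - 1).choose k : ℂ) := by
      rw [mul_comm (m : ℂ)]
      exact_mod_cast hnat.symm
    have hpow : m - k - 1 = m - 1 - k := by omega
    rw [hpow, smul_smul, smul_smul]
    congr 1
    linear_combination ((-1 : ℂ) ^ k * (k.factorial : ℂ) * (n.choose k : ℂ)) * hc
  · intro k hk hk'
    simp only [Finset.mem_range] at hk hk'
    have : m - k = 0 := by omega
    simp [this]

lemma hermiteBC_symm (m n : ℕ) (Z W : ℂ × ℂ) :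
    hermiteBC m n Z W = hermiteBC n m W Z := by
  unfold hermiteBC
  rw [min_comm]
  refine Finset.sum_congr rfl fun k _ => ?_
  rw [mul_comm (Z ^ (m - k)) (W ^ (n - k))]
  congr 1
  ring

lemma hermiteBC_appell_aux (m n : ℕ) (Z W : ℂ × ℂ) (hm : 1 ≤ m) :
    HasFDerivAt (fun Z' => hermiteBC m n Z' W)
      (ContinuousLinearMap.mul ℂ (ℂ × ℂ) ((m : ℂ) • hermiteBC (m - 1) n Z W)) Z := by
  have h := hermiteBC_hasFDerivAt_fst m n Z W
  rwa [hermiteBC_key m n hm Z W] at h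

/-- **Appell property of the bicomplex Hermite polynomials:** for `m ≥ 1` the map
`Z ↦ 𝐇_{m,n}(Z,W)` is complex Fréchet differentiable, with derivative the multiplication
map `T ↦ m 𝐇_{m-1,n}(Z,W) ⬝ T` in the algebra `ℂ × ℂ`; similarly in the second variable
for `n ≥ 1`. -/
theorem hermiteBC_appell (m n : ℕ) (Z W : ℂ × ℂ) :
    (1 ≤ m →
      HasFDerivAt (fun Z' => hermiteBC m n Z' W)
        (ContinuousLinearMap.mul ℂ (ℂ × ℂ) ((m : ℂ) • hermiteBC (m - 1) n Z W)) Z) ∧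
    (1 ≤ n →
      HasFDerivAt (fun W' => hermiteBC m n Z W')
        (ContinuousLinearMap.mul ℂ (ℂ × ℂ) ((n : ℂ) • hermiteBC m (n - 1) Z W)) W) := by
  constructor
  · exact fun hm => hermiteBC_appell_aux m n Z W hm
  · intro hn
    have h := hermiteBC_appell_aux n m W Z hn
    have hfun : (fun W' => hermiteBC n m W' Z) = fun W' => hermiteBC m n Z W' := by
      funext W'; exact hermiteBC_symm n m W' Z
    rw [hfun, hermiteBC_symm (n - 1) m W Z] at h
    exact h
end

section
/- Rodrigues formula for bicomplex Hermite polynomials (idempotent form): for all m, n ∈ ℕ and every Z = (λ₁, λ₂) ∈ ℂ × ℂ, each idempotent component of 𝐇_{m,n}(Z, Z*) satisfies, for j = 1, 2: (𝐇_{m,n}(Z, Z*))_j = (−1)^{m+n} · e^{|λ_j|²} · D_j, where D_j is obtained by taking the n-th iterated complex derivative of z ↦ exp(−z·w) in the first variable, then the m-th iterated complex derivative of the result in the second variable, evaluated at (λ_j, conj λ_j). In other words 𝐇_{m,n}(Z, Z*) = (−1)^{m+n} e^{|Z|ₖ²} ∂^{m+n}/∂(Z*)^m ∂Z^n (e^{−|Z|ₖ²}).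 -/
open Complex

lemma inner_iter (w : ℂ) (n : ℕ) :
    iteratedDeriv n (fun z => Complex.exp (-(z * w))) =
      fun z => (-w) ^ n * Complex.exp (-(z * w)) := by
  induction n with
  | zero => funext z; simp
  | succ n ih =>
    rw [iteratedDeriv_succ, ih]
    funext z
    have h1 : HasDerivAt (fun z : ℂ => -(z * w)) (-w) z := by
      simpa using ((hasDerivAt_id z).mul_const w).fun_neg
    have h2 := (h1.cexp.const_mul ((-w) ^ n)).deriv
    rw [h2]; ring

lemma hderiv_term (a w c : ℂ) (p : ℕ) :
    HasDerivAt (fun w => c * (w ^ p * Complex.exp (-(a * w))))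
      (c * ((p : ℂ) * w ^ (p - 1) * Complex.exp (-(a * w)) +
        w ^ p * (Complex.exp (-(a * w)) * -a))) w := by
  have h1 : HasDerivAt (fun w : ℂ => -(a * w)) (-a) w := by
    simpa using ((hasDerivAt_id w).const_mul a).fun_neg
  exact ((hasDerivAt_pow p w).mul h1.cexp).const_mul c

lemma choose_shuffle (m : ℕ) (G : ℕ → ℂ) :
    ∑ k ∈ Finset.range (m + 2), ((m + 1).choose k : ℂ) * G k =
      ∑ k ∈ Finset.range (m + 1), (m.choose k : ℂ) * G (k + 1) +
        ∑ k ∈ Finset.range (m + 1), (m.choose k : ℂ) * G k := by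
  rw [Finset.sum_range_succ' (fun k => ((m + 1).choose k : ℂ) * G k)]
  have h1 : ∀ k, (((m + 1).choose (k + 1) : ℕ) : ℂ) * G (k + 1) =
      (m.choose k : ℂ) * G (k + 1) + (m.choose (k + 1) : ℂ) * G (k + 1) := by
    intro k
    rw [Nat.choose_succ_succ]
    push_cast
    ring
  rw [Finset.sum_congr rfl (fun k _ => h1 k), Finset.sum_add_distrib]
  have h2 : ∑ k ∈ Finset.range (m + 1), (m.choose (k + 1) : ℂ) * G (k + 1) +
      ((m + 1).choose 0 : ℂ) * G 0 = ∑ k ∈ Finset.range (m + 1), (m.choose k : ℂ) * G k := by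
    rw [show ((m + 1).choose 0 : ℂ) = ((m.choose 0 : ℕ) : ℂ) by simp,
      ← Finset.sum_range_succ' (fun k => (m.choose k : ℂ) * G k),
      Finset.sum_range_succ]
    simp
  rw [add_assoc, h2]

lemma outer_iter (a : ℂ) (n m : ℕ) :
    ∀ w, iteratedDeriv m (fun w => (-w) ^ n * Complex.exp (-(a * w))) w =
      ∑ k ∈ Finset.range (m + 1),
        ((-1 : ℂ) ^ n * (m.choose k : ℂ) * (n.descFactorial k : ℂ) * (-a) ^ (m - k)) *
          (w ^ (n - k) * Complex.exp (-(a * w))) := by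
  induction m with
  | zero =>
    intro w
    rw [iteratedDeriv_zero, Finset.sum_range_one, neg_pow]
    norm_num [mul_assoc]
  | succ m ih =>
    intro w
    rw [iteratedDeriv_succ]
    have hfun : iteratedDeriv m (fun w => (-w) ^ n * Complex.exp (-(a * w))) =
        fun w => ∑ k ∈ Finset.range (m + 1),
          ((-1 : ℂ) ^ n * (m.choose k : ℂ) * (n.descFactorial k : ℂ) * (-a) ^ (m - k)) *
            (w ^ (n - k) * Complex.exp (-(a * w))) := funext ih
    rw [hfun]
    have hd : HasDerivAt (fun w => ∑ k ∈ Finset.range (m + 1),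
        ((-1 : ℂ) ^ n * (m.choose k : ℂ) * (n.descFactorial k : ℂ) * (-a) ^ (m - k)) *
          (w ^ (n - k) * Complex.exp (-(a * w))))
        (∑ k ∈ Finset.range (m + 1),
          ((-1 : ℂ) ^ n * (m.choose k : ℂ) * (n.descFactorial k : ℂ) * (-a) ^ (m - k)) *
            (((n - k : ℕ) : ℂ) * w ^ (n - k - 1) * Complex.exp (-(a * w)) +
              w ^ (n - k) * (Complex.exp (-(a * w)) * -a))) w :=
      HasDerivAt.fun_sum (fun k _ => hderiv_term a w _ (n - k))
    rw [hd.deriv]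
    -- now a pure algebraic sum identity
    set E := Complex.exp (-(a * w)) with hE
    have key : ∀ k, ((-1 : ℂ) ^ n * (m.choose k : ℂ) * (n.descFactorial k : ℂ) * (-a) ^ (m - k)) *
        (((n - k : ℕ) : ℂ) * w ^ (n - k - 1) * E + w ^ (n - k) * (E * -a)) =
        (m.choose k : ℂ) * (((-1 : ℂ) ^ n * (n.descFactorial (k + 1) : ℂ) * (-a) ^ (m + 1 - (k + 1))) *
          (w ^ (n - (k + 1)) * E)) +
        (m.choose k : ℂ) * (((-1 : ℂ) ^ n * (n.descFactorial k : ℂ) * (-a) ^ (m + 1 - k)) *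
          (w ^ (n - k) * E)) := by
      intro k
      have hdf : ((n.descFactorial (k + 1) : ℕ) : ℂ) = ((n - k : ℕ) : ℂ) * (n.descFactorial k : ℂ) := by
        rw [Nat.descFactorial_succ]; push_cast; ring
      have hsub : n - (k + 1) = n - k - 1 := by omega
      have hsub2 : m + 1 - (k + 1) = m - k := by omega
      by_cases hk : k ≤ m
      · have hsub3 : m + 1 - k = (m - k) + 1 := by omega
        rw [hdf, hsub, hsub2, hsub3, pow_succ]
        ring
      · simp [Nat.choose_eq_zero_of_lt (by omega : m < k)]
    rw [Finset.sum_congr rfl (fun k _ => key k), Finset.sum_add_distrib]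
    symm
    have hre : ∑ k ∈ Finset.range (m + 1 + 1),
        (-1 : ℂ) ^ n * ((m + 1).choose k : ℂ) * (n.descFactorial k : ℂ) * (-a) ^ (m + 1 - k) *
          (w ^ (n - k) * E) =
        ∑ k ∈ Finset.range (m + 2), ((m + 1).choose k : ℂ) *
          (((-1 : ℂ) ^ n * (n.descFactorial k : ℂ) * (-a) ^ (m + 1 - k)) * (w ^ (n - k) * E)) :=
      Finset.sum_congr rfl (fun k _ => by ring)
    rw [hre, choose_shuffle]

lemma rod_key (m n : ℕ) (a : ℂ) :
    ∑ k ∈ Finset.range (min m n + 1),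
      ((-1 : ℂ) ^ k * (k.factorial : ℂ) * (m.choose k : ℂ) * (n.choose k : ℂ)) *
        (a ^ (m - k) * (starRingEnd ℂ a) ^ (n - k)) =
    (-1 : ℂ) ^ (m + n) * Complex.exp ((‖a‖ : ℂ) ^ 2) *
      iteratedDeriv m (fun w => iteratedDeriv n (fun z => Complex.exp (-(z * w))) a)
        (starRingEnd ℂ a) := by
  have h1 : (fun w => iteratedDeriv n (fun z => Complex.exp (-(z * w))) a) =
      fun w => (-w) ^ n * Complex.exp (-(a * w)) := by
    funext w
    rw [inner_iter w n]
  rw [h1, outer_iter a n m (starRingEnd ℂ a), Finset.mul_sum]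
  have hs : ((‖a‖ : ℂ)) ^ 2 = a * starRingEnd ℂ a := by
    rw [Complex.mul_conj]
    norm_cast
    exact Complex.sq_norm a
  have hexp : Complex.exp (a * starRingEnd ℂ a) * Complex.exp (-(a * starRingEnd ℂ a)) = 1 := by
    rw [← Complex.exp_add]; simp
  have hterm : ∀ k ∈ Finset.range (m + 1),
      (-1 : ℂ) ^ (m + n) * Complex.exp ((‖a‖ : ℂ) ^ 2) *
        (((-1 : ℂ) ^ n * (m.choose k : ℂ) * (n.descFactorial k : ℂ) * (-a) ^ (m - k)) *
          ((starRingEnd ℂ a) ^ (n - k) * Complex.exp (-(a * starRingEnd ℂ a)))) =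
      ((-1 : ℂ) ^ k * (k.factorial : ℂ) * (m.choose k : ℂ) * (n.choose k : ℂ)) *
        (a ^ (m - k) * (starRingEnd ℂ a) ^ (n - k)) := by
    intro k hk
    have hkm : k ≤ m := by simpa [Nat.lt_succ_iff] using Finset.mem_range.mp hk
    have hdf : ((n.descFactorial k : ℕ) : ℂ) = (k.factorial : ℂ) * (n.choose k : ℂ) := by
      rw [Nat.descFactorial_eq_factorial_mul_choose]; push_cast; ring
    have hsign : (-1 : ℂ) ^ (m + n) * ((-1 : ℂ) ^ n * (-1 : ℂ) ^ (m - k)) = (-1 : ℂ) ^ k := by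
      rw [← pow_add, ← pow_add, show m + n + (n + (m - k)) = k + 2 * (n + (m - k)) by omega,
        pow_add, pow_mul]
      norm_num
    rw [hs, neg_pow a, hdf]
    calc (-1 : ℂ) ^ (m + n) * Complex.exp (a * starRingEnd ℂ a) *
          (((-1 : ℂ) ^ n * (m.choose k : ℂ) * ((k.factorial : ℂ) * (n.choose k : ℂ)) *
            ((-1 : ℂ) ^ (m - k) * a ^ (m - k))) *
          ((starRingEnd ℂ a) ^ (n - k) * Complex.exp (-(a * starRingEnd ℂ a))))
        = ((-1 : ℂ) ^ (m + n) * ((-1 : ℂ) ^ n * (-1 : ℂ) ^ (m - k))) *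
            (Complex.exp (a * starRingEnd ℂ a) * Complex.exp (-(a * starRingEnd ℂ a))) *
            ((m.choose k : ℂ) * ((k.factorial : ℂ) * (n.choose k : ℂ)) *
              (a ^ (m - k) * (starRingEnd ℂ a) ^ (n - k))) := by ring
      _ = _ := by rw [hsign, hexp]; ring
  rw [Finset.sum_congr rfl hterm]
  apply Finset.sum_subset (Finset.range_subset_range.mpr (Nat.succ_le_succ (Nat.min_le_left m n)))
  intro k hk hk'
  have hnk : n < k := by
    simp only [Finset.mem_range] at hk hk'
    rcases Nat.lt_or_ge m n with h | h
    · rw [Nat.min_eq_left h.le] at hk'; omega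
    · rw [Nat.min_eq_right h] at hk'; omega
  rw [Nat.choose_eq_zero_of_lt hnk]
  push_cast
  ring


/-- **Rodrigues formula for the bicomplex Hermite polynomials (idempotent form):**
for `Z = (λ₁, λ₂)` and each idempotent component `j = 1, 2`,
`(𝐇_{m,n}(Z,Z*))_j = (-1)^{m+n} e^{|λ_j|²} ∂_{w}^m ∂_{z}^n (e^{-zw})|_{(λ_j, λ̄_j)}`,
i.e. `𝐇_{m,n}(Z,Z*) = (-1)^{m+n} e^{|Z|ₖ²} ∂^{m+n}/∂(Z*)^m ∂Z^n (e^{-|Z|ₖ²})`. -/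
theorem hermiteBC_rodrigues (m n : ℕ) (Z : ℂ × ℂ) :
    (hermiteBC m n Z (star Z)).1 =
      (-1 : ℂ) ^ (m + n) * Complex.exp ((‖Z.1‖ : ℂ) ^ 2) *
        iteratedDeriv m
          (fun w => iteratedDeriv n (fun z => Complex.exp (-(z * w))) Z.1)
          (starRingEnd ℂ Z.1) ∧
    (hermiteBC m n Z (star Z)).2 =
      (-1 : ℂ) ^ (m + n) * Complex.exp ((‖Z.2‖ : ℂ) ^ 2) *
        iteratedDeriv m
          (fun w => iteratedDeriv n (fun z => Complex.exp (-(z * w))) Z.2)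
          (starRingEnd ℂ Z.2) := by
  constructor
  · have h := rod_key m n Z.1
    rw [← h]
    simp [hermiteBC, Prod.fst_sum, smul_eq_mul, Complex.star_def]
  · have h := rod_key m n Z.2
    rw [← h]
    simp [hermiteBC, Prod.snd_sum, smul_eq_mul, Complex.star_def]
end

section
/- Generating function for the bicomplex Hermite polynomials (star version): for all U, V, Z ∈ ℂ × ℂ, the double series Σ_{m=0}^∞ Σ_{n=0}^∞ 𝐇_{m,n}(Z, Z*) · U^m · V^n / (m! n!) converges (as a sum over ℕ × ℕ in the Banach algebra ℂ × ℂ) and equals exp(U·Z + V·Z* − U·V). -/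
open Complex

lemma hasSum_cexp (x : ℂ) : HasSum (fun n : ℕ => x ^ n / n.factorial) (Complex.exp x) := by
  rw [Complex.exp_eq_exp_ℂ]
  exact NormedSpace.expSeries_div_hasSum_exp x

lemma summable_norm_exp (x : ℂ) : Summable (fun n : ℕ => ‖x ^ n / (n.factorial : ℂ)‖) := by
  simpa [norm_div, norm_pow] using Real.summable_pow_div_factorial ‖x‖

lemma keyScalar (u v z w : ℂ) :
    HasSum (fun p : ℕ × ℕ =>
      ((p.1.factorial : ℂ) * (p.2.factorial : ℂ))⁻¹ *
        ((∑ k ∈ Finset.range (min p.1 p.2 + 1),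
          ((-1 : ℂ) ^ k * (k.factorial : ℂ) * (p.1.choose k : ℂ) * (p.2.choose k : ℂ)) *
            (z ^ (p.1 - k) * w ^ (p.2 - k))) * u ^ p.1 * v ^ p.2))
      (Complex.exp (u * z + v * w - u * v)) := by
  have h1 := hasSum_cexp (u * z)
  have h2 := hasSum_cexp (v * w)
  have h3 := hasSum_cexp (-(u * v))
  -- summability of products
  have s12 : Summable (fun q : ℕ × ℕ =>
      (u * z) ^ q.1 / q.1.factorial * ((v * w) ^ q.2 / q.2.factorial)) := by
    apply Summable.of_norm
    simpa [norm_mul] using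
      (summable_norm_exp (u * z)).mul_of_nonneg (summable_norm_exp (v * w))
        (fun _ => norm_nonneg _) (fun _ => norm_nonneg _)
  have h12 := h1.mul h2 s12
  have s123 : Summable (fun q : (ℕ × ℕ) × ℕ =>
      ((u * z) ^ q.1.1 / q.1.1.factorial * ((v * w) ^ q.1.2 / q.1.2.factorial)) *
        ((-(u * v)) ^ q.2 / q.2.factorial)) := by
    apply Summable.of_norm
    simpa [norm_mul] using
      (s12.norm).mul_of_nonneg (summable_norm_exp (-(u * v)))
        (fun _ => norm_nonneg _) (fun _ => norm_nonneg _)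
  have htriple := h12.mul h3 s123
  -- the regrouped function over ((m,n),k)
  set g : (ℕ × ℕ) × ℕ → ℂ := fun q =>
    if q.2 ≤ q.1.1 ∧ q.2 ≤ q.1.2 then
      (-1 : ℂ) ^ q.2 * z ^ (q.1.1 - q.2) * w ^ (q.1.2 - q.2) * u ^ q.1.1 * v ^ q.1.2 /
        ((q.2.factorial : ℂ) * ((q.1.1 - q.2).factorial : ℂ) * ((q.1.2 - q.2).factorial : ℂ))
    else 0 with hg
  have e_inj : Function.Injective
      (fun q : (ℕ × ℕ) × ℕ => (((q.1.1 + q.2, q.1.2 + q.2), q.2) : (ℕ × ℕ) × ℕ)) := by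
    rintro ⟨⟨a, b⟩, k⟩ ⟨⟨a', b'⟩, k'⟩ h
    simp only [Prod.mk.injEq] at h
    obtain ⟨⟨h1', h2'⟩, h3'⟩ := h
    subst h3'
    simp_all [Nat.add_right_cancel_iff]
  have hvanish : ∀ x ∉ Set.range
      (fun q : (ℕ × ℕ) × ℕ => (((q.1.1 + q.2, q.1.2 + q.2), q.2) : (ℕ × ℕ) × ℕ)), g x = 0 := by
    rintro ⟨⟨m, n⟩, k⟩ hx
    rw [hg]
    by_cases h : k ≤ m ∧ k ≤ n
    · exact absurd ⟨((m - k, n - k), k), by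
        simp [Nat.sub_add_cancel h.1, Nat.sub_add_cancel h.2]⟩ hx
    · simp [h]
  have hcomp : HasSum (g ∘ fun q : (ℕ × ℕ) × ℕ => (((q.1.1 + q.2, q.1.2 + q.2), q.2) : (ℕ × ℕ) × ℕ))
      (Complex.exp (u * z) * Complex.exp (v * w) * Complex.exp (-(u * v))) := by
    refine htriple.congr_fun fun q => ?_
    obtain ⟨⟨a, b⟩, c⟩ := q
    have hc : (c.factorial : ℂ) ≠ 0 := Nat.cast_ne_zero.2 c.factorial_ne_zero
    have ha : (a.factorial : ℂ) ≠ 0 := Nat.cast_ne_zero.2 a.factorial_ne_zero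
    have hb : (b.factorial : ℂ) ≠ 0 := Nat.cast_ne_zero.2 b.factorial_ne_zero
    simp only [Function.comp_apply, hg]
    rw [if_pos (by omega : c ≤ a + c ∧ c ≤ b + c)]
    simp only [Nat.add_sub_cancel]
    field_simp
    ring
  have hgsum := (e_inj.hasSum_iff hvanish).mp hcomp
  have hfiber : ∀ p : ℕ × ℕ, HasSum (fun k => g (p, k))
      (((p.1.factorial : ℂ) * (p.2.factorial : ℂ))⁻¹ *
        ((∑ k ∈ Finset.range (min p.1 p.2 + 1),
          ((-1 : ℂ) ^ k * (k.factorial : ℂ) * (p.1.choose k : ℂ) * (p.2.choose k : ℂ)) *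
            (z ^ (p.1 - k) * w ^ (p.2 - k))) * u ^ p.1 * v ^ p.2)) := by
    rintro ⟨m, n⟩
    have hzero : ∀ k ∉ Finset.range (min m n + 1), g ((m, n), k) = 0 := by
      intro k hk
      simp only [Finset.mem_range, Nat.lt_succ_iff, le_min_iff, not_and_or, not_le] at hk
      rw [hg]
      rcases hk with h | h <;> simp [Nat.not_le.2 h, if_neg]
    have := hasSum_sum_of_ne_finset_zero (L := SummationFilter.unconditional ℕ) hzero
    convert this using 1
    simp only
    rw [Finset.sum_mul, Finset.sum_mul, Finset.mul_sum]
    apply Finset.sum_congr rfl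
    intro k hk
    simp only [Finset.mem_range, Nat.lt_succ_iff, le_min_iff] at hk
    obtain ⟨hkm, hkn⟩ := hk
    simp only [hg]
    rw [if_pos ⟨hkm, hkn⟩, Nat.cast_choose ℂ hkm, Nat.cast_choose ℂ hkn]
    have h1' : (k.factorial : ℂ) ≠ 0 := Nat.cast_ne_zero.2 k.factorial_ne_zero
    have h2' : ((m - k).factorial : ℂ) ≠ 0 := Nat.cast_ne_zero.2 (m - k).factorial_ne_zero
    have h3' : ((n - k).factorial : ℂ) ≠ 0 := Nat.cast_ne_zero.2 (n - k).factorial_ne_zero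
    have h4' : (m.factorial : ℂ) ≠ 0 := Nat.cast_ne_zero.2 m.factorial_ne_zero
    have h5' : (n.factorial : ℂ) ≠ 0 := Nat.cast_ne_zero.2 n.factorial_ne_zero
    field_simp
  have hsum2 := hgsum.prod_fiberwise hfiber
  have hexp : Complex.exp (u * z) * Complex.exp (v * w) * Complex.exp (-(u * v))
      = Complex.exp (u * z + v * w - u * v) := by
    rw [← Complex.exp_add, ← Complex.exp_add]; ring_nf
  rwa [hexp] at hsum2

/-- The bicomplex exponential: the componentwise complex exponential on `ℂ × ℂ`. -/
noncomputable def bcExp (Z : ℂ × ℂ) : ℂ × ℂ := (Complex.exp Z.1, Complex.exp Z.2)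

/-- **Generating function for the bicomplex Hermite polynomials (star version):**
`∑_{m,n} 𝐇_{m,n}(Z,Z*) U^m V^n/(m! n!) = exp(UZ + VZ* - UV)` in the bicomplex algebra
`ℂ × ℂ`, where `Z* = star Z` is the componentwise conjugate. -/
theorem hermiteBC_generating_star (U V Z : ℂ × ℂ) :
    HasSum
      (fun p : ℕ × ℕ =>
        ((p.1.factorial : ℂ) * (p.2.factorial : ℂ))⁻¹ •
          (hermiteBC p.1 p.2 Z (star Z) * U ^ p.1 * V ^ p.2))
      (bcExp (U * Z + V * star Z - U * V)) := by
  have h := (keyScalar U.1 V.1 Z.1 (star Z).1).prodMk (keyScalar U.2 V.2 Z.2 (star Z).2)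
  refine h.congr_fun fun p => ?_
  simp only [hermiteBC, Prod.ext_iff, Prod.fst_mul, Prod.snd_mul, Prod.pow_fst, Prod.pow_snd,
    Prod.smul_fst, Prod.smul_snd, Prod.fst_sum, Prod.snd_sum, smul_eq_mul]
  constructor <;> · simp [Finset.sum_mul, Finset.mul_sum]
end

section
/- Mixed iterated derivatives of the quartic Gaussian symbol: let p ≤ q be natural numbers and z₁, z₂, z₃, z₄ ∈ ℂ. Then the p-th iterated complex derivative in the variable z₃ of the q-th iterated complex derivative in the variable z₄ of the function (z₃, z₄) ↦ exp(−z₁ z₂ z₃ z₄) equals (−1)^q Σ_{ℓ=0}^{p} (−1)^ℓ C(p, ℓ) · (q! / (q − p + ℓ)!) · z₁^{q+ℓ} z₂^{q+ℓ} z₃^{q−p+ℓ} z₄^{ℓ} · exp(−z₁ z₂ z₃ z₄). -/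
open Complex

open Finset in
private lemma pascal_sum (p : ℕ) (T : ℕ → ℂ) :
    ∑ ℓ ∈ range (p+1), (p.choose ℓ : ℂ) * T ℓ +
      ∑ ℓ ∈ range (p+1), (p.choose ℓ : ℂ) * T (ℓ+1)
    = ∑ ℓ ∈ range (p+2), ((p+1).choose ℓ : ℂ) * T ℓ := by
  have h1 : ∑ ℓ ∈ range (p+2), (p.choose ℓ : ℂ) * T ℓ
      = ∑ ℓ ∈ range (p+1), (p.choose (ℓ+1) : ℂ) * T (ℓ+1) + (p.choose 0 : ℂ) * T 0 :=
    Finset.sum_range_succ' _ _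
  have h2 : ∑ ℓ ∈ range (p+2), (p.choose ℓ : ℂ) * T ℓ
      = ∑ ℓ ∈ range (p+1), (p.choose ℓ : ℂ) * T ℓ + (p.choose (p+1) : ℂ) * T (p+1) :=
    Finset.sum_range_succ _ _
  have h3 : ∑ ℓ ∈ range (p+2), ((p+1).choose ℓ : ℂ) * T ℓ
      = ∑ ℓ ∈ range (p+1), ((p+1).choose (ℓ+1) : ℂ) * T (ℓ+1) + ((p+1).choose 0 : ℂ) * T 0 :=
    Finset.sum_range_succ' _ _
  have h4 : ∀ ℓ ∈ range (p+1), ((p+1).choose (ℓ+1) : ℂ) * T (ℓ+1)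
      = (p.choose ℓ : ℂ) * T (ℓ+1) + (p.choose (ℓ+1) : ℂ) * T (ℓ+1) := by
    intro ℓ _; rw [Nat.choose_succ_succ]; push_cast; ring
  rw [Finset.sum_congr rfl h4, Finset.sum_add_distrib] at h3
  rw [Nat.choose_succ_self] at h2
  simp only [Nat.choose_zero_right, Nat.cast_one, Nat.cast_zero, one_mul, zero_mul,
    add_zero] at h1 h2 h3
  rw [h3]
  linear_combination h1 - h2

private lemma contdiff_pow_exp (a : ℂ) (n : ℕ) :
    ContDiff ℂ ⊤ (fun w : ℂ => w ^ n * Complex.exp (a * w)) :=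
  (contDiff_id.pow n).mul ((contDiff_const.mul contDiff_id).cexp)

private lemma itd_cmul (n : ℕ) (c : ℂ) (f : ℂ → ℂ) (hf : ContDiff ℂ ⊤ f) (x : ℂ) :
    iteratedDeriv n (fun z => c * f z) x = c * iteratedDeriv n f x := by
  simp only [← iteratedDerivWithin_univ]
  exact iteratedDerivWithin_const_mul (Set.mem_univ x) uniqueDiffOn_univ c
    ((hf.of_le le_top).contDiffWithinAt)

private lemma itd_linear (n : ℕ) (c d : ℂ) (f g : ℂ → ℂ)
    (hf : ContDiff ℂ ⊤ f) (hg : ContDiff ℂ ⊤ g) (x : ℂ) :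
    iteratedDeriv n (fun z => c * f z + d * g z) x
      = c * iteratedDeriv n f x + d * iteratedDeriv n g x := by
  have hcf : ContDiff ℂ ⊤ (fun z => c * f z) := contDiff_const.mul hf
  have hdg : ContDiff ℂ ⊤ (fun z => d * g z) := contDiff_const.mul hg
  have h : (fun z => c * f z + d * g z) = ((fun z => c * f z) + fun z => d * g z) := rfl
  rw [h]
  simp only [← iteratedDerivWithin_univ]
  rw [iteratedDerivWithin_add (Set.mem_univ x) uniqueDiffOn_univ
      ((hcf.of_le le_top).contDiffWithinAt) ((hdg.of_le le_top).contDiffWithinAt),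
    iteratedDerivWithin_const_mul (Set.mem_univ x) uniqueDiffOn_univ c
      ((hf.of_le le_top).contDiffWithinAt),
    iteratedDerivWithin_const_mul (Set.mem_univ x) uniqueDiffOn_univ d
      ((hg.of_le le_top).contDiffWithinAt)]

open Finset in
private lemma key (a : ℂ) : ∀ p m : ℕ, ∀ z : ℂ,
    iteratedDeriv p (fun w => w ^ (p + m) * Complex.exp (a * w)) z
    = ∑ ℓ ∈ range (p+1), (p.choose ℓ : ℂ) *
        (((p+m).factorial : ℂ) / ((m+ℓ).factorial : ℂ)) * z ^ (m+ℓ) * a ^ ℓ *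
        Complex.exp (a * z) := by
  intro p
  induction p with
  | zero =>
    intro m z
    simp [Finset.sum_range_one, div_self (by exact_mod_cast m.factorial_ne_zero : ((m.factorial : ℂ)) ≠ 0)]
  | succ p ih =>
    intro m z
    rw [iteratedDeriv_succ']
    have hd : deriv (fun w : ℂ => w ^ (p+1+m) * Complex.exp (a*w))
        = fun w => ((p+1+m : ℕ) : ℂ) * (w ^ (p+m) * Complex.exp (a*w))
            + a * (w ^ (p+(m+1)) * Complex.exp (a*w)) := by
      funext w
      have H : HasDerivAt (fun w : ℂ => w ^ (p+1+m) * Complex.exp (a*w))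
          (((p+1+m : ℕ) : ℂ) * w ^ (p+1+m-1) * Complex.exp (a*w)
            + w ^ (p+1+m) * (Complex.exp (a*w) * (a * 1))) w :=
        (hasDerivAt_pow _ w).mul (((hasDerivAt_id w).const_mul a).cexp)
      rw [H.deriv, show p + 1 + m - 1 = p + m from by omega,
        show p + (m + 1) = p + 1 + m from by omega]
      ring
    rw [hd]
    rw [itd_linear p _ a _ _ (contdiff_pow_exp a (p+m)) (contdiff_pow_exp a (p+(m+1))) z,
      ih m z, ih (m+1) z]
    set E := Complex.exp (a * z) with hE
    set T : ℕ → ℂ := fun ℓ =>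
      (((p+1+m).factorial : ℂ) / ((m+ℓ).factorial : ℂ)) * z ^ (m+ℓ) * a ^ ℓ * E with hT
    have hfact : ((p+1+m).factorial : ℂ) = ((p+1+m : ℕ) : ℂ) * ((p+m).factorial : ℂ) := by
      have : (p+1+m).factorial = (p+1+m) * (p+m).factorial := by
        rw [show p+1+m = (p+m)+1 by omega, Nat.factorial_succ]
      exact_mod_cast congrArg (Nat.cast : ℕ → ℂ) this
    have e1 : ((p+1+m : ℕ) : ℂ) * ∑ ℓ ∈ range (p+1), (p.choose ℓ : ℂ) *
          (((p+m).factorial : ℂ) / ((m+ℓ).factorial : ℂ)) * z ^ (m+ℓ) * a ^ ℓ * E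
        = ∑ ℓ ∈ range (p+1), (p.choose ℓ : ℂ) * T ℓ := by
      rw [Finset.mul_sum]
      refine Finset.sum_congr rfl fun ℓ _ => ?_
      rw [hT]; simp only []
      rw [hfact]
      ring
    have e2 : a * ∑ ℓ ∈ range (p+1), (p.choose ℓ : ℂ) *
          (((p+(m+1)).factorial : ℂ) / ((m+1+ℓ).factorial : ℂ)) * z ^ (m+1+ℓ) * a ^ ℓ * E
        = ∑ ℓ ∈ range (p+1), (p.choose ℓ : ℂ) * T (ℓ+1) := by
      rw [Finset.mul_sum]
      refine Finset.sum_congr rfl fun ℓ _ => ?_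
      rw [hT]; simp only []
      rw [show p+(m+1) = p+1+m by omega, show m+(ℓ+1) = m+1+ℓ by omega]
      ring
    rw [e1, e2, pascal_sum p T]
    refine Finset.sum_congr rfl fun ℓ _ => ?_
    rw [hT]; ring

/-- **Mixed iterated derivatives of the quartic Gaussian symbol:** for `p ≤ q`,
`∂_{z₃}^p ∂_{z₄}^q exp(-z₁z₂z₃z₄)
  = (-1)^q ∑_{ℓ=0}^{p} (-1)^ℓ C(p,ℓ) (q!/(q-p+ℓ)!) z₁^{q+ℓ} z₂^{q+ℓ} z₃^{q-p+ℓ} z₄^ℓ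
      exp(-z₁z₂z₃z₄)`. -/
theorem iteratedDeriv_quartic_gaussian (p q : ℕ) (hpq : p ≤ q) (z₁ z₂ z₃ z₄ : ℂ) :
    iteratedDeriv p
        (fun w₃ => iteratedDeriv q (fun w₄ => Complex.exp (-(z₁ * z₂ * w₃ * w₄))) z₄) z₃ =
      (-1 : ℂ) ^ q *
        ∑ ℓ ∈ Finset.range (p + 1),
          (-1 : ℂ) ^ ℓ * (p.choose ℓ : ℂ) *
            ((q.factorial : ℂ) / ((q - p + ℓ).factorial : ℂ)) *
            z₁ ^ (q + ℓ) * z₂ ^ (q + ℓ) * z₃ ^ (q - p + ℓ) * z₄ ^ ℓ *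
            Complex.exp (-(z₁ * z₂ * z₃ * z₄)) := by
  set a : ℂ := -(z₁ * z₂ * z₄) with ha
  have hinner : (fun w₃ => iteratedDeriv q (fun w₄ => Complex.exp (-(z₁ * z₂ * w₃ * w₄))) z₄)
      = fun w₃ => ((-1 : ℂ) ^ q * z₁ ^ q * z₂ ^ q) * (w₃ ^ q * Complex.exp (a * w₃)) := by
    funext w₃
    have h1 : (fun w₄ : ℂ => Complex.exp (-(z₁ * z₂ * w₃ * w₄)))
        = fun w₄ => Complex.exp ((-(z₁ * z₂ * w₃)) * w₄) := by
      funext w₄; congr 1; ring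
    rw [h1]
    simp only [iteratedDeriv_cexp_const_mul]
    rw [show (-(z₁ * z₂ * w₃)) * z₄ = a * w₃ by rw [ha]; ring]
    ring
  rw [hinner, itd_cmul p _ _ (contdiff_pow_exp a q) z₃]
  have hq : p + (q - p) = q := Nat.add_sub_cancel' hpq
  have hk := key a p (q - p) z₃
  rw [hq] at hk
  rw [hk, Finset.mul_sum, Finset.mul_sum]
  refine Finset.sum_congr rfl fun ℓ _ => ?_
  rw [show a * z₃ = -(z₁ * z₂ * z₃ * z₄) by rw [ha]; ring, ha]
  ring
end
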